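/- Let Γ ⊂ SL₂(ℤ[ω]) be the subgroup generated by A = [[1,1],[0,1]] and B = [[1,0],[-ω,1]]. For every α ∈ ℚ(ω) (the field ℚ(√-3)), there exists a vector (ξ, η) in the Γ-orbit of (1,0) (under multiplication by a unit) with η ≠ 0 and ξ/η = α. In other words, the set of centers ξ/η of orbit spinors with η ≠ 0 is all of ℚ(ω). -/

import Mathlib

noncomputable def ω : ℂ := -1/2 + (Real.sqrt 3 / 2) * Complex.I

lemma mulVec2 (a b c d x y : ℂ) :
    (!![a,b;c,d]).mulVec ![x,y] = ![a*x+b*y, c*x+d*y] := by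
  funext i
  fin_cases i <;> simp [Matrix.mulVec, dotProduct, Fin.sum_univ_two]

abbrev SL2 := Matrix.SpecialLinearGroup (Fin 2) ℂ

def Reach (A B : SL2) (x y : ℂ) : Prop :=
  ∃ W ∈ Subgroup.closure ({A, B} : Set SL2),
    ((W : Matrix (Fin 2) (Fin 2) ℂ)).mulVec ![1, 0] = ![x, y]

variable {A B : SL2}

lemma reach_one : Reach A B 1 0 := by
  refine ⟨1, Subgroup.one_mem _, ?_⟩
  simp [Matrix.SpecialLinearGroup.coe_one]

lemma reach_congr {x y x' y' : ℂ} (hx : x = x') (hy : y = y')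
    (h : Reach A B x y) : Reach A B x' y' := hx ▸ hy ▸ h

lemma reach_A (hA : (A : Matrix (Fin 2) (Fin 2) ℂ) = !![1, 1; 0, 1])
    {x y : ℂ} (h : Reach A B x y) : Reach A B (x + y) y := by
  obtain ⟨W, hW, hcol⟩ := h
  refine ⟨A * W, Subgroup.mul_mem _ (Subgroup.subset_closure (by simp)) hW, ?_⟩
  rw [Matrix.SpecialLinearGroup.coe_mul, ← Matrix.mulVec_mulVec, hcol, hA, mulVec2]
  funext i; fin_cases i <;> simp <;> ring

lemma reach_Ainv (hA : (A : Matrix (Fin 2) (Fin 2) ℂ) = !![1, 1; 0, 1])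
    {x y : ℂ} (h : Reach A B x y) : Reach A B (x - y) y := by
  obtain ⟨W, hW, hcol⟩ := h
  refine ⟨A⁻¹ * W, Subgroup.mul_mem _ (Subgroup.inv_mem _ (Subgroup.subset_closure (by simp))) hW, ?_⟩
  rw [Matrix.SpecialLinearGroup.coe_mul, ← Matrix.mulVec_mulVec, hcol,
    Matrix.SpecialLinearGroup.coe_inv, hA, Matrix.adjugate_fin_two, mulVec2]
  funext i; fin_cases i <;> simp <;> ring

lemma reach_B (hB : (B : Matrix (Fin 2) (Fin 2) ℂ) = !![1, 0; -ω, 1])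
    {x y : ℂ} (h : Reach A B x y) : Reach A B x (y - ω * x) := by
  obtain ⟨W, hW, hcol⟩ := h
  refine ⟨B * W, Subgroup.mul_mem _ (Subgroup.subset_closure (by simp)) hW, ?_⟩
  rw [Matrix.SpecialLinearGroup.coe_mul, ← Matrix.mulVec_mulVec, hcol, hB, mulVec2]
  funext i; fin_cases i <;> simp <;> ring

lemma reach_Binv (hB : (B : Matrix (Fin 2) (Fin 2) ℂ) = !![1, 0; -ω, 1])
    {x y : ℂ} (h : Reach A B x y) : Reach A B x (y + ω * x) := by
  obtain ⟨W, hW, hcol⟩ := h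
  refine ⟨B⁻¹ * W, Subgroup.mul_mem _ (Subgroup.inv_mem _ (Subgroup.subset_closure (by simp))) hW, ?_⟩
  rw [Matrix.SpecialLinearGroup.coe_mul, ← Matrix.mulVec_mulVec, hcol,
    Matrix.SpecialLinearGroup.coe_inv, hB, Matrix.adjugate_fin_two, mulVec2]
  funext i; fin_cases i <;> simp <;> ring


lemma hom2 : ω^2 = -1 - ω := by
  have h3 : (Real.sqrt 3)^2 = 3 := Real.sq_sqrt (by norm_num)
  apply Complex.ext <;>
    simp [ω, pow_two, Complex.mul_re, Complex.mul_im] <;> nlinarith [h3]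

lemma omega_re : ω.re = -1/2 := by simp [ω]
lemma omega_im : ω.im = Real.sqrt 3 / 2 := by simp [ω]

noncomputable def Ei (a b : ℤ) : ℂ := (a:ℂ) + (b:ℂ) * ω

lemma Ei_ne_zero {c d : ℤ} (h : ¬(c = 0 ∧ d = 0)) : Ei c d ≠ 0 := by
  intro h0
  have h3 : (0:ℝ) < Real.sqrt 3 := Real.sqrt_pos.mpr (by norm_num)
  have him := congrArg Complex.im h0
  have hre := congrArg Complex.re h0
  simp [Ei, omega_im, omega_re, Complex.add_im, Complex.mul_im, Complex.add_re,
    Complex.mul_re] at him hre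
  subst him
  simp at hre
  exact h ⟨by exact_mod_cast hre, rfl⟩

def Good (A B : SL2) (α : ℂ) : Prop :=
  ∃ x y : ℂ, Reach A B x y ∧ y ≠ 0 ∧ x / y = α

section GoodLemmas
variable {A B : SL2} (hA : (A : Matrix (Fin 2) (Fin 2) ℂ) = !![1, 1; 0, 1])
  (hB : (B : Matrix (Fin 2) (Fin 2) ℂ) = !![1, 0; -ω, 1])

lemma good_congr {α β : ℂ} (h : α = β) (hg : Good A B α) : Good A B β := h ▸ hg

include hA in
lemma good_add_one {α : ℂ} (hg : Good A B α) : Good A B (α + 1) := by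
  obtain ⟨x, y, hr, hy, hq⟩ := hg
  exact ⟨x + y, y, reach_A hA hr, hy, by rw [← hq]; field_simp⟩

include hA in
lemma good_sub_one {α : ℂ} (hg : Good A B α) : Good A B (α - 1) := by
  obtain ⟨x, y, hr, hy, hq⟩ := hg
  exact ⟨x - y, y, reach_Ainv hA hr, hy, by rw [← hq]; field_simp⟩

include hA hB in
lemma good_sub_T {α : ℂ} (hg : Good A B α) : Good A B (α - (2 + 4*ω)) := by
  obtain ⟨x, y, hr, hy, hq⟩ := hg
  -- word bABaaBAb : moves B⁻¹, A, B, A⁻¹, A⁻¹, B, A, B⁻¹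
  have n1 : Reach A B x (y + ω*x) := reach_Binv hB hr
  have n2 : Reach A B ((1+ω)*x + y) (y + ω*x) :=
    reach_congr (by ring) rfl (reach_A hA n1)
  have n3 : Reach A B ((1+ω)*x + y) ((1+ω)*x + (1-ω)*y) :=
    reach_congr rfl (by linear_combination (-x) * hom2) (reach_B hB n2)
  have n4 : Reach A B (ω*y) ((1+ω)*x + (1-ω)*y) :=
    reach_congr (by ring) rfl (reach_Ainv hA n3)
  have n5 : Reach A B ((-1-ω)*x + (2*ω-1)*y) ((1+ω)*x + (1-ω)*y) :=
    reach_congr (by ring) rfl (reach_Ainv hA n4)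
  have n6 : Reach A B ((-1-ω)*x + (2*ω-1)*y) (ω*x + (3+2*ω)*y) :=
    reach_congr rfl (by linear_combination (x - 2*y) * hom2) (reach_B hB n5)
  have n7 : Reach A B (-x + (2+4*ω)*y) (ω*x + (3+2*ω)*y) :=
    reach_congr (by ring) rfl (reach_A hA n6)
  have n8 : Reach A B (-x + (2+4*ω)*y) (-y) :=
    reach_congr rfl (by linear_combination (4*y) * hom2) (reach_Binv hB n7)
  refine ⟨_, _, n8, neg_ne_zero.mpr hy, ?_⟩
  rw [div_eq_iff hy] at hq
  rw [div_eq_iff (neg_ne_zero.mpr hy), hq]; ring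

include hA hB in
lemma good_add_T {α : ℂ} (hg : Good A B α) : Good A B (α + (2 + 4*ω)) := by
  obtain ⟨x, y, hr, hy, hq⟩ := hg
  -- word BabAAbaB : moves B, A⁻¹, B⁻¹, A, A, B⁻¹, A⁻¹, B
  have n1 : Reach A B x (y - ω*x) := reach_B hB hr
  have n2 : Reach A B ((1+ω)*x - y) (y - ω*x) :=
    reach_congr (by ring) rfl (reach_Ainv hA n1)
  have n3 : Reach A B ((1+ω)*x - y) ((-1-ω)*x + (1-ω)*y) :=
    reach_congr rfl (by linear_combination x * hom2) (reach_Binv hB n2)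
  have n4 : Reach A B (-(ω*y)) ((-1-ω)*x + (1-ω)*y) :=
    reach_congr (by ring) rfl (reach_A hA n3)
  have n5 : Reach A B ((-1-ω)*x + (1-2*ω)*y) ((-1-ω)*x + (1-ω)*y) :=
    reach_congr (by ring) rfl (reach_A hA n4)
  have n6 : Reach A B ((-1-ω)*x + (1-2*ω)*y) (-(ω*x) + (3+2*ω)*y) :=
    reach_congr rfl (by linear_combination (-x - 2*y) * hom2) (reach_Binv hB n5)
  have n7 : Reach A B (-x + (-2-4*ω)*y) (-(ω*x) + (3+2*ω)*y) :=
    reach_congr (by ring) rfl (reach_Ainv hA n6)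
  have n8 : Reach A B (-x + (-2-4*ω)*y) (-y) :=
    reach_congr rfl (by linear_combination (4*y) * hom2) (reach_B hB n7)
  refine ⟨_, _, n8, neg_ne_zero.mpr hy, ?_⟩
  rw [div_eq_iff hy] at hq
  rw [div_eq_iff (neg_ne_zero.mpr hy), hq]; ring

include hA in
lemma good_add_int {α : ℂ} (m : ℤ) (hg : Good A B α) : Good A B (α + m) := by
  induction m using Int.induction_on with
  | zero => exact good_congr (by norm_num) hg
  | succ k ih => exact good_congr (by push_cast; ring) (good_add_one hA ih)
  | pred k ih => exact good_congr (by push_cast; ring) (good_sub_one hA ih)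

include hA hB in
lemma good_translate {α : ℂ} (m j : ℤ) (hg : Good A B α) :
    Good A B (α + m + j * (2 + 4*ω)) := by
  induction j using Int.induction_on with
  | zero => exact good_congr (by push_cast; ring) (good_add_int hA m hg)
  | succ k ih => exact good_congr (by push_cast; ring) (good_add_T hA hB ih)
  | pred k ih => exact good_congr (by push_cast; ring) (good_sub_T hA hB ih)

end GoodLemmas

section Seeds
variable {A B : SL2} (hA : (A : Matrix (Fin 2) (Fin 2) ℂ) = !![1, 1; 0, 1])
  (hB : (B : Matrix (Fin 2) (Fin 2) ℂ) = !![1, 0; -ω, 1])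

lemma neg_one_sub_omega_ne : (-1 - ω : ℂ) ≠ 0 := by
  have := Ei_ne_zero (c := -1) (d := -1) (by norm_num)
  simpa [Ei, sub_eq_add_neg] using this

lemma omega_ne : (ω : ℂ) ≠ 0 := by
  have := Ei_ne_zero (c := 0) (d := 1) (by norm_num)
  simpa [Ei] using this

include hA hB in
lemma good_zero : Good A B 0 := by
  -- word AbaB : moves B, A⁻¹, B⁻¹, A
  have n1 : Reach A B 1 (-ω) := reach_congr rfl (by ring) (reach_B hB (reach_one (A := A) (B := B)))
  have n2 : Reach A B (1 + ω) (-ω) := reach_congr (by ring) rfl (reach_Ainv hA n1)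
  have n3 : Reach A B (1 + ω) (-1 - ω) :=
    reach_congr rfl (by linear_combination hom2) (reach_Binv hB n2)
  have n4 : Reach A B 0 (-1 - ω) := reach_congr (by ring) rfl (reach_A hA n3)
  exact ⟨_, _, n4, neg_one_sub_omega_ne, by simp⟩

include hA hB in
lemma good_omega : Good A B ω := by
  have n1 : Reach A B 1 (-ω) := reach_congr rfl (by ring) (reach_B hB (reach_one (A := A) (B := B)))
  have n2 : Reach A B (1 + ω) (-ω) := reach_congr (by ring) rfl (reach_Ainv hA n1)
  refine ⟨_, _, n2, neg_ne_zero.mpr omega_ne, ?_⟩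
  rw [div_eq_iff (neg_ne_zero.mpr omega_ne)]
  linear_combination hom2

include hB in
lemma good_omega2 : Good A B (-1 - ω) := by
  have n1 : Reach A B 1 (0 + ω*1) := reach_Binv hB (reach_one (A := A) (B := B))
  have n1' : Reach A B 1 ω := reach_congr rfl (by ring) n1
  refine ⟨_, _, n1', omega_ne, ?_⟩
  rw [div_eq_iff omega_ne]
  linear_combination hom2

include hA hB in
lemma good_two_omega : Good A B (2 * ω) := by
  -- word aBab : moves B⁻¹, A⁻¹, B, A⁻¹
  have n1 : Reach A B 1 ω :=
    reach_congr rfl (by ring) (reach_Binv hB (reach_one (A := A) (B := B)))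
  have n2 : Reach A B (1 - ω) ω := reach_congr (by ring) rfl (reach_Ainv hA n1)
  have n3 : Reach A B (1 - ω) (-1 - ω) :=
    reach_congr rfl (by linear_combination hom2) (reach_B hB n2)
  have n4 : Reach A B 2 (-1 - ω) :=
    reach_congr (by ring) rfl (reach_Ainv hA n3)
  refine ⟨_, _, n4, neg_one_sub_omega_ne, ?_⟩
  rw [div_eq_iff neg_one_sub_omega_ne]
  linear_combination 2*hom2

include hA hB in
lemma good_base (a b : ℤ) : Good A B (Ei a b) := by
  have hb : b = 4 * (b / 4) + b % 4 := by omega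
  set j := b / 4 with hj
  have hr4 : b % 4 = 0 ∨ b % 4 = 1 ∨ b % 4 = 2 ∨ b % 4 = 3 := by omega
  rcases hr4 with h | h | h | h
  · exact good_congr (by rw [Ei]; push_cast [show b = 4*j by omega]; ring)
      (good_translate hA hB (a - 2*j) j (good_zero hA hB))
  · exact good_congr (by rw [Ei]; push_cast [show b = 4*j+1 by omega]; ring)
      (good_translate hA hB (a - 2*j) j (good_omega hA hB))
  · exact good_congr (by rw [Ei]; push_cast [show b = 4*j+2 by omega]; ring)
      (good_translate hA hB (a - 2*j) j (good_two_omega hA hB))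
  · exact good_congr (by rw [Ei]; push_cast [show b = 4*j+3 by omega]; ring)
      (good_translate hA hB (a + 1 - 2*(j+1)) (j+1) (good_omega2 hB))

include hA hB in
lemma good_div {β s : ℂ} (hs : s = 1 ∨ s = -1) (hg : Good A B β)
    (hne : 1 - s * ω * β ≠ 0) : Good A B (β / (1 - s * ω * β)) := by
  obtain ⟨x, y, hr, hy, hq⟩ := hg
  rw [div_eq_iff hy] at hq
  have hy' : y - s * ω * x ≠ 0 := by
    rw [hq]
    intro h0
    apply hne
    have : y * (1 - s * ω * β) = 0 := by rw [← h0]; ring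
    rcases mul_eq_zero.mp this with h | h
    · exact absurd h hy
    · exact h
  have hrs : Reach A B x (y - s * ω * x) := by
    rcases hs with rfl | rfl
    · exact reach_congr rfl (by ring) (reach_B hB hr)
    · exact reach_congr rfl (by ring) (reach_Binv hB hr)
  refine ⟨_, _, hrs, hy', ?_⟩
  rw [div_eq_div_iff hy' hne, hq]
  ring

end Seeds

section Reduction
variable {A B : SL2} (hA : (A : Matrix (Fin 2) (Fin 2) ℂ) = !![1, 1; 0, 1])
  (hB : (B : Matrix (Fin 2) (Fin 2) ℂ) = !![1, 0; -ω, 1])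

lemma norm_pos {c d : ℤ} (h : ¬(c = 0 ∧ d = 0)) : 1 ≤ c^2 - c*d + d^2 := by
  have h4 : 4*(c^2 - c*d + d^2) = (2*c - d)^2 + 3*d^2 := by ring
  by_cases hd : d = 0
  · subst hd
    have hc : c ≠ 0 := by tauto
    have : 1 ≤ |c| := Int.one_le_abs hc
    nlinarith [sq_abs c]
  · have : 1 ≤ |d| := Int.one_le_abs hd
    nlinarith [sq_abs d, sq_nonneg (2*c - d)]

include hA hB in
lemma reduction (n : ℕ)
    (IH : ∀ a b c d : ℤ, c^2 - c*d + d^2 ≤ (n:ℤ) → Ei c d ≠ 0 →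
      Good A B (Ei a b / Ei c d))
    (a b c d t₁ t₂ j s : ℤ) (hs : s = 1 ∨ s = -1) (ht₂ : t₂ = 4*j)
    (hy : Ei c d ≠ 0)
    (hmn : c^2 - c*d + d^2 ≤ (n:ℤ) + 1)
    (hUV : (a*c - a*d + b*d - (t₁+s)*(c^2 - c*d + d^2))^2
         - (a*c - a*d + b*d - (t₁+s)*(c^2 - c*d + d^2)) *
           (b*c - a*d - (t₂+s)*(c^2 - c*d + d^2))
         + (b*c - a*d - (t₂+s)*(c^2 - c*d + d^2))^2 < (c^2 - c*d + d^2)^2)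
    (hδ : ¬(a*c - a*d + b*d - (t₁+s)*(c^2 - c*d + d^2) = 0 ∧
            b*c - a*d - (t₂+s)*(c^2 - c*d + d^2) = 0)) :
    Good A B (Ei a b / Ei c d) := by
  have hcd : ¬(c = 0 ∧ d = 0) := by
    rintro ⟨rfl, rfl⟩; exact hy (by simp [Ei])
  set m : ℤ := c^2 - c*d + d^2 with hm
  set U : ℤ := a*c - a*d + b*d - (t₁+s)*m with hU
  set V : ℤ := b*c - a*d - (t₂+s)*m with hV
  have hm1 : 1 ≤ m := norm_pos hcd
  obtain ⟨a₁, ha₁⟩ : ∃ x : ℤ, x = a - t₁*c + t₂*d := ⟨_, rfl⟩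
  obtain ⟨b₁, hb₁⟩ : ∃ x : ℤ, x = b - t₁*d - t₂*c + t₂*d := ⟨_, rfl⟩
  obtain ⟨a₂, ha₂⟩ : ∃ x : ℤ, x = a₁ + s*(d - c) := ⟨_, rfl⟩
  obtain ⟨b₂, hb₂⟩ : ∃ x : ℤ, x = b₁ - s*c := ⟨_, rfl⟩
  obtain ⟨c₁, hc₁⟩ : ∃ x : ℤ, x = c - s*b₁ := ⟨_, rfl⟩
  obtain ⟨d₁, hd₁⟩ : ∃ x : ℤ, x = d + s*(a₁ - b₁) := ⟨_, rfl⟩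
  have I1 : m * a₂ = U*c - V*d := by
    rw [hU, hV, hm, ha₂, ha₁]; ring
  have I2 : m * b₂ = U*d + V*c - V*d := by
    rw [hU, hV, hm, hb₂, hb₁]; ring
  have keym : m * (m * (a₂^2 - a₂*b₂ + b₂^2)) = m * (U^2 - U*V + V^2) := by
    have e : m * (m * (a₂^2 - a₂*b₂ + b₂^2)) =
        (m*a₂)^2 - (m*a₂)*(m*b₂) + (m*b₂)^2 := by ring
    rw [e, I1, I2, hm]; ring
  have hm0 : (0:ℤ) < m := by linarith
  have keyN : m * (a₂^2 - a₂*b₂ + b₂^2) = U^2 - U*V + V^2 :=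
    mul_left_cancel₀ hm0.ne' keym
  have hUVpos : 1 ≤ U^2 - U*V + V^2 := norm_pos hδ
  have hmul : m * (a₂^2 - a₂*b₂ + b₂^2) < m * m := by
    rw [keyN, ← pow_two]
    exact hUV
  have hN2lt : a₂^2 - a₂*b₂ + b₂^2 < m := lt_of_mul_lt_mul_left hmul hm0.le
  have hN2pos : 1 ≤ a₂^2 - a₂*b₂ + b₂^2 := by
    have h1 : m * 0 < m * (a₂^2 - a₂*b₂ + b₂^2) := by rw [keyN]; linarith
    have h2 : (0:ℤ) < a₂^2 - a₂*b₂ + b₂^2 := lt_of_mul_lt_mul_left h1 hm0.le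
    exact Int.lt_iff_add_one_le.mp h2
  have hI4 : c₁^2 - c₁*d₁ + d₁^2 = a₂^2 - a₂*b₂ + b₂^2 := by
    subst hc₁ hd₁ ha₂ hb₂
    rcases hs with rfl | rfl <;> ring
  have hy1 : Ei c₁ d₁ ≠ 0 := by
    apply Ei_ne_zero
    rintro ⟨h1, h2⟩
    rw [h1, h2] at hI4
    simp at hI4
    linarith
  have hble : c₁^2 - c₁*d₁ + d₁^2 ≤ (n:ℤ) := by
    have hadd : a₂^2 - a₂*b₂ + b₂^2 + 1 ≤ m := Int.lt_iff_add_one_le.mp hN2lt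
    linarith
  have hG1 : Good A B (Ei a₁ b₁ / Ei c₁ d₁) := IH a₁ b₁ c₁ d₁ hble hy1
  have F2 : Ei c d = Ei c₁ d₁ - (s:ℂ) * ω * Ei a₁ b₁ := by
    subst hc₁ hd₁ ha₁ hb₁
    rw [Ei, Ei, Ei]
    push_cast
    linear_combination ((s:ℂ) * ((b:ℂ) - (d:ℂ)*(t₁:ℂ) - (c:ℂ)*(t₂:ℂ) + (d:ℂ)*(t₂:ℂ))) * hom2
  have hsC : ((s:ℤ):ℂ) = 1 ∨ ((s:ℤ):ℂ) = -1 := by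
    rcases hs with rfl | rfl <;> norm_num
  have hfe : 1 - (s:ℂ) * ω * (Ei a₁ b₁ / Ei c₁ d₁) = Ei c d / Ei c₁ d₁ := by
    rw [eq_div_iff hy1, F2]
    field_simp
  have hne : 1 - (s:ℂ) * ω * (Ei a₁ b₁ / Ei c₁ d₁) ≠ 0 := by
    rw [hfe]
    exact div_ne_zero hy hy1
  have hG2 := good_div hA hB hsC hG1 hne
  have hG3 : Good A B (Ei a₁ b₁ / Ei c d) := by
    apply good_congr _ hG2
    rw [hfe, div_div_div_comm, div_self hy1, div_one]
  have hG4 := good_translate hA hB (t₁ - 2*j) j hG3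
  apply good_congr _ hG4
  have F1 : Ei a b = Ei a₁ b₁ + ((t₁:ℂ) + (t₂:ℂ)*ω) * Ei c d := by
    subst ha₁ hb₁
    rw [Ei, Ei, Ei]
    push_cast
    linear_combination (-(d:ℂ)*(t₂:ℂ)) * hom2
  rw [eq_div_iff hy, add_mul, add_mul, div_mul_cancel₀ _ hy, F1]
  push_cast [ht₂]
  ring

end Reduction


section Main
variable {A B : SL2} (hA : (A : Matrix (Fin 2) (Fin 2) ℂ) = !![1, 1; 0, 1])
  (hB : (B : Matrix (Fin 2) (Fin 2) ℂ) = !![1, 0; -ω, 1])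

lemma UV_bound (u v m t₁ t₂ s : ℤ) (hm : 1 ≤ m)
    (h : ((u:ℚ)/m - t₁ - s)^2 - ((u:ℚ)/m - t₁ - s)*((v:ℚ)/m - t₂ - s)
       + ((v:ℚ)/m - t₂ - s)^2 < 1) :
    (u - (t₁+s)*m)^2 - (u - (t₁+s)*m)*(v - (t₂+s)*m) + (v - (t₂+s)*m)^2 < m^2 := by
  have hm0 : (0:ℚ) < (m:ℚ) := by exact_mod_cast (by linarith : (0:ℤ) < m)
  have key : ((u - (t₁+s)*m : ℤ) : ℚ)^2 - ((u - (t₁+s)*m : ℤ):ℚ)*((v - (t₂+s)*m : ℤ):ℚ)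
      + ((v - (t₂+s)*m:ℤ):ℚ)^2 < ((m:ℤ):ℚ)^2 := by
    push_cast
    have e1 : ((u:ℚ) - ((t₁:ℚ)+(s:ℚ))*(m:ℚ)) = (m:ℚ) * ((u:ℚ)/m - t₁ - s) := by
      field_simp; ring
    have e2 : ((v:ℚ) - ((t₂:ℚ)+(s:ℚ))*(m:ℚ)) = (m:ℚ) * ((v:ℚ)/m - t₂ - s) := by
      field_simp; ring
    calc ((u:ℚ) - ((t₁:ℚ)+(s:ℚ))*(m:ℚ))^2
          - ((u:ℚ) - ((t₁:ℚ)+(s:ℚ))*(m:ℚ)) * ((v:ℚ) - ((t₂:ℚ)+(s:ℚ))*(m:ℚ))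
          + ((v:ℚ) - ((t₂:ℚ)+(s:ℚ))*(m:ℚ))^2
        = (m:ℚ)^2 * (((u:ℚ)/m - t₁ - s)^2 - ((u:ℚ)/m - t₁ - s)*((v:ℚ)/m - t₂ - s)
            + ((v:ℚ)/m - t₂ - s)^2) := by rw [e1, e2]; ring
      _ < (m:ℚ)^2 * 1 := by
            apply mul_lt_mul_of_pos_left h
            positivity
      _ = (m:ℚ)^2 := by ring
  exact_mod_cast key

lemma case_ineq1 (P Q : ℚ) (hQ : Q = -1) (h1 : -1 < P) (h2 : P < 0) :
    P^2 - P*Q + Q^2 < 1 := by subst hQ; nlinarith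
lemma case_ineq2 (P Q : ℚ) (hQ : Q = 1) (h1 : 0 < P) (h2 : P < 1) :
    P^2 - P*Q + Q^2 < 1 := by subst hQ; nlinarith
lemma case_ineq3 (P Q : ℚ) (hQ1 : -1 < Q) (hQ2 : Q < 1)
    (h1 : -(1/2) ≤ P - Q/2) (h2 : P - Q/2 < 1/2) : P^2 - P*Q + Q^2 < 1 := by
  nlinarith [mul_nonneg (by linarith : (0:ℚ) ≤ P - Q/2 + 1/2)
      (by linarith : (0:ℚ) ≤ 1/2 - (P - Q/2)),
    mul_pos (by linarith : (0:ℚ) < 1 - Q) (by linarith : (0:ℚ) < 1 + Q)]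

include hA hB in
lemma main_ind : ∀ n : ℕ, ∀ a b c d : ℤ, c^2 - c*d + d^2 ≤ (n:ℤ) → Ei c d ≠ 0 →
    Good A B (Ei a b / Ei c d) := by
  intro n
  induction n with
  | zero =>
    intro a b c d hle hy
    exfalso
    have h1 := norm_pos (show ¬(c = 0 ∧ d = 0) by rintro ⟨rfl, rfl⟩; exact hy (by simp [Ei]))
    norm_num at hle
    linarith
  | succ n IH =>
    intro a b c d hle hy
    have hcd : ¬(c = 0 ∧ d = 0) := by rintro ⟨rfl, rfl⟩; exact hy (by simp [Ei])
    have hm1 : 1 ≤ c^2 - c*d + d^2 := norm_pos hcd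
    have hmn : c^2 - c*d + d^2 ≤ (n:ℤ) + 1 := by push_cast at hle; linarith
    have hm0 : (0:ℚ) < ((c^2 - c*d + d^2 : ℤ):ℚ) := by
      exact_mod_cast (by linarith : (0:ℤ) < c^2 - c*d + d^2)
    by_cases hI : (c^2 - c*d + d^2) ∣ (a*c - a*d + b*d) ∧ (c^2 - c*d + d^2) ∣ (b*c - a*d)
    · obtain ⟨⟨a', ha'⟩, ⟨b', hb'⟩⟩ := hI
      have hm0C : ((c^2 - c*d + d^2 : ℤ):ℂ) ≠ 0 :=
        Int.cast_ne_zero.mpr (by linarith : (c^2 - c*d + d^2:ℤ) ≠ 0)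
      have hdiv : Ei a b / Ei c d = Ei a' b' := by
        rw [div_eq_iff hy]
        apply mul_left_cancel₀ hm0C
        have ha'C : ((a:ℂ)*c - a*d + b*d) = ((c:ℂ)^2 - c*d + d^2) * a' := by
          exact_mod_cast congrArg (Int.cast : ℤ → ℂ) ha'
        have hb'C : ((b:ℂ)*c - a*d) = ((c:ℂ)^2 - c*d + d^2) * b' := by
          exact_mod_cast congrArg (Int.cast : ℤ → ℂ) hb'
        rw [Ei, Ei, Ei]; push_cast
        linear_combination ((c:ℂ)+(d:ℂ)*ω) * ha'C + ((c:ℂ)*ω+(d:ℂ)*ω^2) * hb'C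
          + ((a:ℂ)*(d:ℂ)^2 - (b:ℂ)*(c:ℂ)*(d:ℂ)) * hom2
      exact good_congr hdiv.symm (good_base hA hB a' b')
    · obtain ⟨p, hp⟩ : ∃ x : ℚ,
        x = ((a*c - a*d + b*d : ℤ):ℚ)/((c^2 - c*d + d^2 : ℤ):ℚ) := ⟨_, rfl⟩
      obtain ⟨q, hq⟩ : ∃ x : ℚ,
        x = ((b*c - a*d : ℤ):ℚ)/((c^2 - c*d + d^2 : ℤ):ℚ) := ⟨_, rfl⟩
      have hpm : p * ((c^2 - c*d + d^2 : ℤ):ℚ) = ((a*c - a*d + b*d : ℤ):ℚ) := by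
        rw [hp, div_mul_cancel₀ _ (ne_of_gt hm0)]
      have hqm : q * ((c^2 - c*d + d^2 : ℤ):ℚ) = ((b*c - a*d : ℤ):ℚ) := by
        rw [hq, div_mul_cancel₀ _ (ne_of_gt hm0)]
      obtain ⟨k, hk⟩ : ∃ x : ℤ, x = ⌊q/2⌋ := ⟨_, rfl⟩
      have hk1 : (k:ℚ) ≤ q/2 := hk ▸ Int.floor_le _
      have hk2 : q/2 < k + 1 := hk ▸ Int.lt_floor_add_one _
      by_cases hqe : q = 2*k
      · -- q is an even integer
        have hmdvd : (c^2 - c*d + d^2) ∣ (b*c - a*d) := by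
          refine ⟨2*k, ?_⟩
          have hcast : ((b*c - a*d : ℤ):ℚ) = (((c^2 - c*d + d^2)*(2*k) : ℤ):ℚ) := by
            rw [← hqm, hqe]; push_cast; ring
          exact_mod_cast hcast
        have hnd : ¬ (c^2 - c*d + d^2) ∣ (a*c - a*d + b*d) := fun h => hI ⟨h, hmdvd⟩
        obtain ⟨fl, hfl⟩ : ∃ x : ℤ, x = ⌊p⌋ := ⟨_, rfl⟩
        have hfl2 : p < fl + 1 := hfl ▸ Int.lt_floor_add_one _
        have hfl1 : (fl:ℚ) < p := by
          rcases lt_or_eq_of_le (hfl ▸ Int.floor_le p) with h | h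
          · exact h
          · exfalso
            apply hnd
            refine ⟨fl, ?_⟩
            have hc2 : ((a*c - a*d + b*d : ℤ):ℚ) = (((c^2 - c*d + d^2) * fl : ℤ):ℚ) := by
              rw [← hpm, ← h]; push_cast; ring
            exact_mod_cast hc2
        rcases Int.even_or_odd k with ⟨j, hj⟩ | ⟨j, hj⟩
        · -- k even : s = 1, t₂ = 4j, Q = -1, t₁ = fl
          apply reduction hA hB n IH a b c d fl (4*j) j 1 (Or.inl rfl) rfl hy hmn
          · apply UV_bound _ _ _ _ _ _ hm1
            rw [← hp, ← hq]
            push_cast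
            apply case_ineq1
            · have : (k:ℚ) = (j:ℚ) + (j:ℚ) := by exact_mod_cast hj
              linarith
            · linarith
            · linarith
          · rintro ⟨h1, -⟩
            exact hnd ⟨fl + 1, by linarith⟩
        · -- k odd : s = 1, t₂ = 4j, Q = 1, t₁ = fl - 1
          apply reduction hA hB n IH a b c d (fl - 1) (4*j) j 1 (Or.inl rfl) rfl hy hmn
          · apply UV_bound _ _ _ _ _ _ hm1
            rw [← hp, ← hq]
            push_cast
            apply case_ineq2
            · have : (k:ℚ) = 2*(j:ℚ) + 1 := by exact_mod_cast hj
              linarith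
            · linarith
            · linarith
          · rintro ⟨h1, -⟩
            exact hnd ⟨fl, by linarith⟩
      · -- q not an even integer
        have hQ2 : q - (2*k+1) < 1 := by linarith
        have hQ1 : -1 < q - (2*k+1) := by
          rcases lt_or_eq_of_le (by linarith : (2*k:ℚ) ≤ q) with h | h
          · linarith
          · exact absurd h.symm hqe
        rcases Int.even_or_odd k with ⟨j, hj⟩ | ⟨j, hj⟩
        · -- k even : s = 1, t₂ = 4j
          obtain ⟨t₁, ht₁⟩ : ∃ x : ℤ, x = ⌊p - 1 - (q - (2*k+1))/2 + 1/2⌋ := ⟨_, rfl⟩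
          have hb1 : (t₁:ℚ) ≤ p - 1 - (q - (2*k+1))/2 + 1/2 := ht₁ ▸ Int.floor_le _
          have hb2 : p - 1 - (q - (2*k+1))/2 + 1/2 < t₁ + 1 := ht₁ ▸ Int.lt_floor_add_one _
          apply reduction hA hB n IH a b c d t₁ (4*j) j 1 (Or.inl rfl) rfl hy hmn
          · apply UV_bound _ _ _ _ _ _ hm1
            rw [← hp, ← hq]
            push_cast
            have hkj : (k:ℚ) = (j:ℚ) + (j:ℚ) := by exact_mod_cast hj
            apply case_ineq3
            · linarith
            · linarith
            · linarith
            · linarith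
          · rintro ⟨h1, h2⟩
            exact hI ⟨⟨t₁ + 1, by linarith⟩, ⟨4*j + 1, by linarith⟩⟩
        · -- k odd : s = -1, t₂ = 4(j+1)
          obtain ⟨t₁, ht₁⟩ : ∃ x : ℤ, x = ⌊p + 1 - (q - (2*k+1))/2 + 1/2⌋ := ⟨_, rfl⟩
          have hb1 : (t₁:ℚ) ≤ p + 1 - (q - (2*k+1))/2 + 1/2 := ht₁ ▸ Int.floor_le _
          have hb2 : p + 1 - (q - (2*k+1))/2 + 1/2 < t₁ + 1 := ht₁ ▸ Int.lt_floor_add_one _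
          apply reduction hA hB n IH a b c d t₁ (4*(j+1)) (j+1) (-1) (Or.inr rfl) rfl hy hmn
          · apply UV_bound _ _ _ _ _ _ hm1
            rw [← hp, ← hq]
            push_cast
            have hkj : (k:ℚ) = 2*(j:ℚ) + 1 := by exact_mod_cast hj
            apply case_ineq3
            · linarith
            · linarith
            · linarith
            · linarith
          · rintro ⟨h1, h2⟩
            exact hI ⟨⟨t₁ + -1, by linarith⟩, ⟨4*(j+1) + -1, by linarith⟩⟩

end Main

theorem orbit_centres_dense (A B : Matrix.SpecialLinearGroup (Fin 2) ℂ)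
    (hA : (A : Matrix (Fin 2) (Fin 2) ℂ) = !![1, 1; 0, 1])
    (hB : (B : Matrix (Fin 2) (Fin 2) ℂ) = !![1, 0; -ω, 1])
    (α : ℂ) (hα : ∃ p q : ℚ, α = (p : ℂ) + (q : ℂ) * ω) :
    ∃ W ∈ Subgroup.closure ({A, B} : Set (Matrix.SpecialLinearGroup (Fin 2) ℂ)),
      ∃ ξ η : ℂ, ((W : Matrix (Fin 2) (Fin 2) ℂ)).mulVec ![1, 0] = ![ξ, η] ∧
        η ≠ 0 ∧ ξ / η = α := by
  obtain ⟨p, q, rfl⟩ := hα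
  set a : ℤ := p.num * q.den with ha
  set b : ℤ := q.num * p.den with hb
  set c : ℤ := (p.den : ℤ) * q.den with hc
  have hc0 : c ≠ 0 := by
    rw [hc]
    exact mul_ne_zero (Int.natCast_ne_zero.mpr p.den_nz) (Int.natCast_ne_zero.mpr q.den_nz)
  have hcC : (c:ℂ) ≠ 0 := Int.cast_ne_zero.mpr hc0
  have hEc : Ei c 0 = (c:ℂ) := by simp [Ei]
  have hEc0 : Ei c 0 ≠ 0 := by rw [hEc]; exact hcC
  have hle : c^2 - c*0 + 0^2 ≤ ((c^2).toNat : ℤ) := by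
    simpa using Int.self_le_toNat (c^2)
  have hGood := main_ind hA hB (c^2).toNat a b c 0 hle hEc0
  have hval : Ei a b / Ei c 0 = (p : ℂ) + (q : ℂ) * ω := by
    rw [hEc, div_eq_iff hcC, Ei]
    have hpnum : ((p.num : ℂ)) = (p : ℂ) * (p.den : ℂ) := by
      rw [Rat.cast_def]
      field_simp
    have hqnum : ((q.num : ℂ)) = (q : ℂ) * (q.den : ℂ) := by
      rw [Rat.cast_def]
      field_simp
    rw [ha, hb, hc]
    push_cast
    rw [hpnum, hqnum]
    ring
  rw [hval] at hGood
  obtain ⟨ξ, η, ⟨W, hW, hcol⟩, hη, hr⟩ := hGood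
  exact ⟨W, hW, ξ, η, hcol, hη, hr⟩
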